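/- The set C₂ = {(x, y) ∈ ℝ × ℝ : y² = x³ − x and x ≥ 1} is nonempty, closed, connected, and unbounded as a subset of ℝ². -/

import Mathlib

lemma branch_nonneg {x : ℝ} (hx : 1 ≤ x) : 0 ≤ x ^ 3 - x := by nlinarith [sq_nonneg x, sq_nonneg (x-1)]

lemma branch_eq :
    {p : ℝ × ℝ | p.2 ^ 2 = p.1 ^ 3 - p.1 ∧ 1 ≤ p.1} =
      (fun x : ℝ => (x, Real.sqrt (x ^ 3 - x))) '' Set.Ici 1 ∪
      (fun x : ℝ => (x, -Real.sqrt (x ^ 3 - x))) '' Set.Ici 1 := by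
  ext ⟨x, y⟩
  simp only [Set.mem_setOf_eq, Set.mem_union, Set.mem_image, Set.mem_Ici, Prod.mk.injEq]
  constructor
  · rintro ⟨h, hx⟩
    have hs : Real.sqrt (x ^ 3 - x) = |y| := by
      rw [← h]; exact Real.sqrt_sq_eq_abs y
    rcases le_or_gt 0 y with hy | hy
    · exact Or.inl ⟨x, hx, rfl, by rw [hs, abs_of_nonneg hy]⟩
    · exact Or.inr ⟨x, hx, rfl, by rw [hs, abs_of_neg hy, neg_neg]⟩
  · rintro (⟨t, ht, rfl, rfl⟩ | ⟨t, ht, rfl, rfl⟩) <;>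
      simp [Real.sq_sqrt (branch_nonneg ht), ht]

/-- The unbounded branch `C₂ = {(x,y) : y² = x³ − x, x ≥ 1}` of the real elliptic
curve is nonempty, closed, connected and unbounded. -/
theorem real_elliptic_curve_branch_closed_connected_unbounded :
    ({p : ℝ × ℝ | p.2 ^ 2 = p.1 ^ 3 - p.1 ∧ 1 ≤ p.1}).Nonempty ∧
    IsClosed {p : ℝ × ℝ | p.2 ^ 2 = p.1 ^ 3 - p.1 ∧ 1 ≤ p.1} ∧
    IsConnected {p : ℝ × ℝ | p.2 ^ 2 = p.1 ^ 3 - p.1 ∧ 1 ≤ p.1} ∧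
    ¬ Bornology.IsBounded {p : ℝ × ℝ | p.2 ^ 2 = p.1 ^ 3 - p.1 ∧ 1 ≤ p.1} := by
  refine ⟨⟨(1, 0), by norm_num⟩, ?_, ?_, ?_⟩
  · have : {p : ℝ × ℝ | p.2 ^ 2 = p.1 ^ 3 - p.1 ∧ 1 ≤ p.1} =
        {p : ℝ × ℝ | p.2 ^ 2 = p.1 ^ 3 - p.1} ∩ {p : ℝ × ℝ | 1 ≤ p.1} := rfl
    rw [this]
    exact (isClosed_eq (by fun_prop) (by fun_prop)).inter (isClosed_le (by fun_prop) (by fun_prop))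
  · rw [branch_eq]
    have hc1 : Continuous fun x : ℝ => (x, Real.sqrt (x ^ 3 - x)) := by fun_prop
    have hc2 : Continuous fun x : ℝ => (x, -Real.sqrt (x ^ 3 - x)) := by fun_prop
    have hI : IsConnected (Set.Ici (1 : ℝ)) := isConnected_Ici
    refine IsConnected.union ⟨(1, 0), ?_, ?_⟩ (hI.image _ hc1.continuousOn)
      (hI.image _ hc2.continuousOn)
    · exact ⟨1, by norm_num⟩
    · exact ⟨1, by norm_num⟩
  · intro hb
    obtain ⟨r, hr⟩ := hb.exists_norm_le
    set x : ℝ := max 1 (r + 1) with hx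
    have hx1 : (1 : ℝ) ≤ x := le_max_left _ _
    have hmem : (x, Real.sqrt (x ^ 3 - x)) ∈
        {p : ℝ × ℝ | p.2 ^ 2 = p.1 ^ 3 - p.1 ∧ 1 ≤ p.1} := by
      exact ⟨Real.sq_sqrt (branch_nonneg hx1), hx1⟩
    have := hr _ hmem
    have h1 : ‖x‖ ≤ r := le_trans (norm_fst_le ((x, Real.sqrt (x ^ 3 - x)) : ℝ × ℝ)) this
    have : x ≤ r := le_trans (le_abs_self x) h1
    have : r + 1 ≤ x := le_max_right _ _
    linarith
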